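/- For every n ≥ 1 and every matrix A ∈ M_n(ℂ), the centralizer {B ∈ M_n(ℂ) : AB = BA}, viewed as a ℂ-linear subspace of M_n(ℂ), has dimension at least n. -/

import Mathlib

open Matrix Module MvPolynomial

open Matrix Module

lemma aux_indep_mem {K V : Type*} [Field K] [AddCommGroup V] [Module K V]
    [FiniteDimensional K V] {k : ℕ} {p : Submodule K V} {w : Fin k → V}
    (hw : LinearIndependent K w) (hmem : ∀ i, w i ∈ p) : k ≤ finrank K p := by
  have : LinearIndependent K (fun i => (⟨w i, hmem i⟩ : p)) := by
    apply LinearIndependent.of_comp p.subtype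
    exact hw
  simpa using this.fintype_card_le_finrank

lemma gram_det_ne_zero {m k : Type*} [Fintype m] [Fintype k] [DecidableEq k]
    {w : k → m → ℂ} (hw : LinearIndependent ℂ w) :
    (Matrix.of fun i j : k => ∑ c, (starRingEnd ℂ) (w i c) * w j c).det ≠ 0 := by
  intro hdet
  obtain ⟨c, hc, hmv⟩ := (Matrix.exists_mulVec_eq_zero_iff).mpr hdet
  set v : m → ℂ := fun x => ∑ j, c j * w j x with hvdef
  have key : ∑ x, (starRingEnd ℂ) (v x) * v x = 0 := by
    have expand : ∀ x, (starRingEnd ℂ) (v x) * v x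
        = ∑ i, (starRingEnd ℂ) (c i) * ((starRingEnd ℂ) (w i x) * v x) := by
      intro x
      simp only [hvdef, map_sum, _root_.map_mul, Finset.sum_mul]
      exact Finset.sum_congr rfl fun i _ => by ring
    calc ∑ x, (starRingEnd ℂ) (v x) * v x
        = ∑ x, ∑ i, (starRingEnd ℂ) (c i) * ((starRingEnd ℂ) (w i x) * v x) := by
          exact Finset.sum_congr rfl fun x _ => expand x
      _ = ∑ i, (starRingEnd ℂ) (c i) * ∑ x, (starRingEnd ℂ) (w i x) * v x := by
          rw [Finset.sum_comm]; simp [Finset.mul_sum]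
      _ = ∑ i, (starRingEnd ℂ) (c i) * ((Matrix.of fun i j : k =>
            ∑ c, (starRingEnd ℂ) (w i c) * w j c).mulVec c i) := by
          apply Finset.sum_congr rfl; intro i _
          congr 1
          simp only [Matrix.mulVec, dotProduct, of_apply, hvdef, Finset.mul_sum,
            Finset.sum_mul]
          rw [Finset.sum_comm]
          apply Finset.sum_congr rfl; intro x _
          apply Finset.sum_congr rfl; intro j _
          ring
      _ = 0 := by rw [hmv]; simp
  have hv0 : v = 0 := by
    have : ∑ x, (Complex.normSq (v x) : ℂ) = 0 := by
      rw [← key]; exact Finset.sum_congr rfl fun x _ => by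
        rw [mul_comm]; exact (Complex.mul_conj (v x)).symm
    have hr : ∑ x, Complex.normSq (v x) = 0 := by exact_mod_cast this
    funext x
    have := (Finset.sum_eq_zero_iff_of_nonneg (fun i _ => Complex.normSq_nonneg (v i))).mp hr x
      (Finset.mem_univ x)
    exact Complex.normSq_eq_zero.mp this
  apply hc
  funext i
  exact Fintype.linearIndependent_iff.mp hw c (by
    funext x; simpa [hvdef] using congrFun hv0 x) i
set_option maxHeartbeats 1000000
set_option synthInstance.maxHeartbeats 400000


noncomputable abbrev Rpoly (n : ℕ) := MvPolynomial (Fin n × Fin n) ℂ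
noncomputable abbrev Kfrac (n : ℕ) := FractionRing (Rpoly n)
noncomputable def Gmat (n : ℕ) : Matrix (Fin n) (Fin n) (Rpoly n) :=
  Matrix.of fun i j => MvPolynomial.X (i, j)
noncomputable def GK (n : ℕ) : Matrix (Fin n) (Fin n) (Kfrac n) :=
  (Gmat n).map (algebraMap (Rpoly n) (Kfrac n))

-- the shift (nilpotent Jordan) point
def aShift (n : ℕ) : Fin n × Fin n → ℂ := fun p => if p.1.val = p.2.val + 1 then 1 else 0

lemma shift_pow (n : ℕ) (hn : 0 < n) (m : ℕ) (hm : m < n) :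
    ((Matrix.of fun r s : Fin n => aShift n (r, s)) ^ m) *ᵥ
      Pi.single (⟨0, hn⟩ : Fin n) 1 = Pi.single (⟨m, hm⟩ : Fin n) 1 := by
  induction m with
  | zero => rw [pow_zero, Matrix.one_mulVec]
  | succ m ih =>
    rw [pow_succ', ← Matrix.mulVec_mulVec, ih (Nat.lt_of_succ_lt hm)]
    funext r
    simp only [Matrix.mulVec_single, of_apply, aShift, mul_one]
    by_cases h : r = (⟨m + 1, hm⟩ : Fin n)
    · subst h; simp
    · rw [Pi.single_eq_of_ne h]
      have : ¬ r.val = m + 1 := fun hc => h (Fin.ext hc)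
      simp [this]

lemma map_pow_apply {R S : Type*} [CommRing R] [CommRing S] (f : R →+* S) {n : ℕ}
    (M : Matrix (Fin n) (Fin n) R) (m : ℕ) (r s : Fin n) :
    f ((M ^ m) r s) = ((M.map f) ^ m) r s := by
  have h := congrArg (fun N : Matrix (Fin n) (Fin n) S => N r s)
    (map_pow (RingHom.mapMatrix f) M m)
  simpa [RingHom.mapMatrix_apply] using h

noncomputable def Qdet (n : ℕ) (hn : 0 < n) : Rpoly n :=
  (Matrix.of fun i j : Fin n => ((Gmat n) ^ (i : ℕ)) j ⟨0, hn⟩).det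

lemma Qdet_ne_zero (n : ℕ) (hn : 0 < n) : Qdet n hn ≠ 0 := by
  intro h
  have h2 := congrArg (MvPolynomial.eval (aShift n)) h
  rw [Qdet, RingHom.map_det, map_zero, RingHom.mapMatrix_apply] at h2
  have hmat : ((Matrix.of fun i j : Fin n => ((Gmat n) ^ (i : ℕ)) j ⟨0, hn⟩).map
      (MvPolynomial.eval (aShift n))) = (1 : Matrix (Fin n) (Fin n) ℂ)ᵀ := by
    funext i j
    have hmp := map_pow_apply (MvPolynomial.eval (aShift n)) (Gmat n) (i : ℕ) j ⟨0, hn⟩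
    have hG : (Gmat n).map (MvPolynomial.eval (aShift n))
        = Matrix.of fun r s : Fin n => aShift n (r, s) := by
      funext r s; simp [Gmat]
    have hcol := congrFun (shift_pow n hn (i : ℕ) i.isLt) j
    simp only [Matrix.map_apply, Matrix.of_apply] at *
    rw [hmp, hG]
    have : ((Matrix.of fun r s : Fin n => aShift n (r, s)) ^ (i:ℕ)) j ⟨0, hn⟩
        = (((Matrix.of fun r s : Fin n => aShift n (r, s)) ^ (i:ℕ)) *ᵥ
            Pi.single (⟨0, hn⟩ : Fin n) 1) j := by
      simp [Matrix.mulVec_single]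
    rw [this, hcol]
    simp [Pi.single_apply, Matrix.one_apply, Matrix.transpose_apply, Fin.eta, eq_comm]
  rw [hmat] at h2
  simp at h2

lemma powers_indep (n : ℕ) (hn : 0 < n) :
    LinearIndependent (Kfrac n) (fun i : Fin n => (GK n) ^ (i : ℕ)) := by
  rw [Fintype.linearIndependent_iff]
  intro c hc
  by_contra hne
  push_neg at hne
  obtain ⟨i0, hi0⟩ := hne
  obtain ⟨b, hb⟩ := IsLocalization.exist_integer_multiples_of_finite
      (nonZeroDivisors (Rpoly n)) c
  have hb' : ∀ i, ∃ r : Rpoly n, algebraMap (Rpoly n) (Kfrac n) r = (b : Rpoly n) • c i :=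
    fun i => hb i
  choose p hp using hb'
  have hbne : algebraMap (Rpoly n) (Kfrac n) (b : Rpoly n) ≠ 0 := by
    have : (b : Rpoly n) ≠ 0 := nonZeroDivisors.coe_ne_zero b
    simpa using fun h => this (IsFractionRing.injective (Rpoly n) (Kfrac n) (by simpa using h))
  have hpi0 : p i0 ≠ 0 := by
    intro h0
    have := hp i0
    rw [h0, map_zero] at this
    have : algebraMap (Rpoly n) (Kfrac n) (b : Rpoly n) * c i0 = 0 := by
      rw [← Algebra.smul_def]; exact this.symm
    exact hi0 ((mul_eq_zero.mp this).resolve_left hbne)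
  -- the relation over the polynomial ring
  have hrel : ∑ i : Fin n, p i • (Gmat n) ^ (i : ℕ) = 0 := by
    funext r s
    apply IsFractionRing.injective (Rpoly n) (Kfrac n)
    have hentry : (∑ i : Fin n, p i • (Gmat n) ^ (i : ℕ)) r s
        = ∑ i : Fin n, p i * ((Gmat n ^ (i : ℕ)) r s) := by
      simp [Matrix.sum_apply]
    rw [hentry, Matrix.zero_apply, map_zero, map_sum]
    have hK : ∑ i : Fin n, c i * ((GK n ^ (i : ℕ)) r s) = 0 := by
      have := congrFun (congrFun hc r) s
      simpa [Matrix.sum_apply] using this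
    calc ∑ i : Fin n, algebraMap (Rpoly n) (Kfrac n) (p i * (Gmat n ^ (i : ℕ)) r s)
        = ∑ i : Fin n, (algebraMap (Rpoly n) (Kfrac n) (b : Rpoly n) * c i)
            * ((GK n ^ (i : ℕ)) r s) := by
          refine Finset.sum_congr rfl fun i _ => ?_
          rw [_root_.map_mul, hp i, map_pow_apply,
            show ((b : Rpoly n) • c i) = algebraMap (Rpoly n) (Kfrac n) (b : Rpoly n) * c i
              from by
                rw [← IsScalarTower.algebraMap_smul (Kfrac n) (b : Rpoly n) (c i), smul_eq_mul]]
          rfl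
      _ = algebraMap (Rpoly n) (Kfrac n) (b : Rpoly n)
            * ∑ i : Fin n, c i * ((GK n ^ (i : ℕ)) r s) := by
          rw [Finset.mul_sum]; exact Finset.sum_congr rfl fun i _ => by ring
      _ = 0 := by rw [hK, mul_zero]
  -- choose an evaluation point
  have hQ : p i0 * Qdet n hn ≠ 0 := mul_ne_zero hpi0 (Qdet_ne_zero n hn)
  have hex : ∃ x : Fin n × Fin n → ℂ, MvPolynomial.eval x (p i0 * Qdet n hn) ≠ 0 := by
    by_contra h
    push_neg at h
    exact hQ (MvPolynomial.funext fun x => by simpa using h x)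
  obtain ⟨a, ha⟩ := hex
  rw [_root_.map_mul, mul_ne_zero_iff] at ha
  obtain ⟨hap, haQ⟩ := ha
  set N : Matrix (Fin n) (Fin n) ℂ := (Gmat n).map (MvPolynomial.eval a) with hN
  set W : Matrix (Fin n) (Fin n) ℂ :=
    Matrix.of fun i j : Fin n => (N ^ (i : ℕ)) j ⟨0, hn⟩ with hW
  have hdetW : W.det ≠ 0 := by
    have : W = (Matrix.of fun i j : Fin n => ((Gmat n) ^ (i : ℕ)) j ⟨0, hn⟩).map
        (MvPolynomial.eval a) := by
      funext i j
      simp only [hW, Matrix.map_apply, Matrix.of_apply]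
      rw [map_pow_apply]
    rw [this, ← RingHom.mapMatrix_apply, ← RingHom.map_det]
    exact haQ
  have hvm : (fun i : Fin n => MvPolynomial.eval a (p i)) ᵥ* W = 0 := by
    funext j
    have := congrArg (MvPolynomial.eval a)
      (congrFun (congrFun hrel j) ⟨0, hn⟩)
    simp only [Matrix.sum_apply, Matrix.smul_apply, smul_eq_mul, Matrix.zero_apply, map_zero,
      map_sum, _root_.map_mul] at this
    simp only [Matrix.vecMul, dotProduct, hW, Matrix.of_apply, Pi.zero_apply]
    rw [← this]
    refine Finset.sum_congr rfl fun i _ => ?_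
    rw [map_pow_apply]
  have : (fun i : Fin n => MvPolynomial.eval a (p i)) = 0 := by
    by_contra hv
    exact hdetW (Matrix.exists_vecMul_eq_zero_iff.mp ⟨_, hv, hvm⟩)
  exact hap (congrFun this i0)

section Transfer

variable (n : ℕ)

noncomputable def LK (n : ℕ) :
    Matrix (Fin n) (Fin n) (Kfrac n) →ₗ[Kfrac n] Matrix (Fin n) (Fin n) (Kfrac n) where
  toFun X := GK n * X - X * GK n
  map_add' X Y := by
    rw [mul_add, add_mul]; abel
  map_smul' c X := by
    simp only [RingHom.id_apply, smul_sub]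
    congr 1
    · funext r s
      simp [Matrix.mul_apply, Finset.mul_sum, mul_left_comm]
    · funext r s
      simp [Matrix.mul_apply, Finset.mul_sum, mul_left_comm, mul_comm]

noncomputable def LA (n : ℕ) (A : Matrix (Fin n) (Fin n) ℂ) :
    Matrix (Fin n) (Fin n) ℂ →ₗ[ℂ] Matrix (Fin n) (Fin n) ℂ where
  toFun X := A * X - X * A
  map_add' X Y := by
    rw [mul_add, add_mul]; abel
  map_smul' c X := by
    simp only [RingHom.id_apply, smul_sub]
    congr 1
    · funext r s
      simp [Matrix.mul_apply, Finset.mul_sum, mul_left_comm]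
    · funext r s
      simp [Matrix.mul_apply, Finset.mul_sum, mul_left_comm, mul_comm]

lemma LK_apply (X : Matrix (Fin n) (Fin n) (Kfrac n)) :
    LK n X = GK n * X - X * GK n := rfl

lemma ker_LK_ge (hn : 0 < n) : n ≤ Module.finrank (Kfrac n) (LinearMap.ker (LK n)) := by
  have := aux_indep_mem (powers_indep n hn) (fun i : Fin n => by
    exact LinearMap.mem_ker.mpr (by
      rw [LK_apply, sub_eq_zero]
      exact (Commute.refl (GK n)).pow_right (i : ℕ)))
  exact this

lemma range_LK_le (hn : 0 < n) :
    Module.finrank (Kfrac n) (LinearMap.range (LK n)) + n ≤ n * n := by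
  have h1 := LinearMap.finrank_range_add_finrank_ker (LK n)
  rw [Module.finrank_matrix, Module.finrank_self, mul_one] at h1
  have h2 := ker_LK_ge n hn
  simp only [Fintype.card_fin] at h1
  omega

end Transfer

lemma LA_apply (n : ℕ) (A X : Matrix (Fin n) (Fin n) ℂ) :
    LA n A X = A * X - X * A := rfl

lemma range_LA_le (n : ℕ) (A : Matrix (Fin n) (Fin n) ℂ) :
    Module.finrank ℂ (LinearMap.range (LA n A))
      ≤ Module.finrank (Kfrac n) (LinearMap.range (LK n)) := by
  set k := Module.finrank ℂ (LinearMap.range (LA n A)) with hk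
  let bW := Module.finBasis ℂ (LinearMap.range (LA n A))
  set w : Fin k → Matrix (Fin n) (Fin n) ℂ :=
    fun i => (bW i : Matrix (Fin n) (Fin n) ℂ) with hwdef
  have hw : LinearIndependent ℂ w :=
    bW.linearIndependent.map' (LinearMap.range (LA n A)).subtype (Submodule.ker_subtype _)
  have hmem : ∀ i, w i ∈ LinearMap.range (LA n A) := fun i => (bW i).2
  choose B hB using fun i => LinearMap.mem_range.mp (hmem i)
  let T : Matrix (Fin n) (Fin n) ℂ →ₗ[ℂ] ((Fin n × Fin n) → ℂ) :=
    { toFun := fun M c => M c.1 c.2,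
      map_add' := fun M N => rfl,
      map_smul' := fun a M => rfl }
  have hker : LinearMap.ker T = ⊥ := by
    rw [LinearMap.ker_eq_bot']
    intro M hM
    funext r s
    exact congrFun hM (r, s)
  have hw' : LinearIndependent ℂ (fun i => T (w i)) := hw.map' T hker
  have hGram := gram_det_ne_zero hw'
  set φ := algebraMap (Rpoly n) (Kfrac n) with hφ
  set BR : Fin k → Matrix (Fin n) (Fin n) (Rpoly n) :=
    fun j => (B j).map MvPolynomial.C with hBR
  set colR : Fin k → Matrix (Fin n) (Fin n) (Rpoly n) :=
    fun j => Gmat n * BR j - BR j * Gmat n with hcolR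
  set Pmat : Matrix (Fin k) (Fin k) (Rpoly n) :=
    Matrix.of (fun i j => ∑ c : Fin n × Fin n,
      MvPolynomial.C ((starRingEnd ℂ) (w i c.1 c.2)) * (colR j c.1 c.2)) with hPmat
  have hPeval : Pmat.map (MvPolynomial.eval (fun c : Fin n × Fin n => A c.1 c.2))
      = Matrix.of fun i j => ∑ c : Fin n × Fin n,
          (starRingEnd ℂ) (T (w i) c) * (T (w j) c) := by
    funext i j
    rw [hPmat]
    simp only [Matrix.map_apply, Matrix.of_apply, map_sum, _root_.map_mul, MvPolynomial.eval_C]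
    refine Finset.sum_congr rfl fun c _ => ?_
    congr 1
    have hwj : w j = A * B j - B j * A := by rw [← hB j]; rfl
    show MvPolynomial.eval _ (colR j c.1 c.2) = w j c.1 c.2
    rw [hwj, hcolR]
    simp [hBR, Gmat, Matrix.sub_apply, Matrix.mul_apply, map_sum, _root_.map_mul]
  have hdetP : Pmat.det ≠ 0 := by
    intro h
    apply hGram
    have h2 := congrArg (MvPolynomial.eval (fun c : Fin n × Fin n => A c.1 c.2)) h
    rw [RingHom.map_det, map_zero, RingHom.mapMatrix_apply, hPeval] at h2
    exact h2
  set uK : Fin k → Matrix (Fin n) (Fin n) (Kfrac n) := fun j => (colR j).map φ with huK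
  have humem : ∀ j, uK j ∈ LinearMap.range (LK n) := by
    intro j
    refine ⟨(BR j).map φ, ?_⟩
    rw [LK_apply]
    funext r s
    rw [huK, hcolR]
    simp [hBR, GK, hφ, Matrix.sub_apply, Matrix.mul_apply, map_sum, _root_.map_mul]
  have hu : LinearIndependent (Kfrac n) uK := by
    rw [Fintype.linearIndependent_iff]
    intro c hc
    have hPK : (Pmat.map φ).det ≠ 0 := by
      rw [← RingHom.mapMatrix_apply, ← RingHom.map_det]
      intro h
      exact hdetP (IsFractionRing.injective (Rpoly n) (Kfrac n)
        (h.trans (map_zero φ).symm))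
    have hc' : ∀ r s, ∑ j, c j * uK j r s = 0 := by
      intro r s
      have := congrFun (congrFun hc r) s
      simpa [Matrix.sum_apply] using this
    have hmv : (Pmat.map φ).mulVec c = 0 := by
      funext i
      calc ((Pmat.map φ).mulVec c) i
          = ∑ j, (∑ cc : Fin n × Fin n,
              φ (MvPolynomial.C ((starRingEnd ℂ) (w i cc.1 cc.2))) * uK j cc.1 cc.2) * c j := by
            rw [hPmat, huK]
            simp only [Matrix.mulVec, dotProduct, Matrix.map_apply, Matrix.of_apply,
              map_sum, _root_.map_mul]
        _ = ∑ j, ∑ cc : Fin n × Fin n,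
              φ (MvPolynomial.C ((starRingEnd ℂ) (w i cc.1 cc.2))) * (c j * uK j cc.1 cc.2) := by
            refine Finset.sum_congr rfl fun j _ => ?_
            rw [Finset.sum_mul]
            exact Finset.sum_congr rfl fun cc _ => by ring
        _ = ∑ cc : Fin n × Fin n,
              φ (MvPolynomial.C ((starRingEnd ℂ) (w i cc.1 cc.2)))
                * ∑ j, c j * uK j cc.1 cc.2 := by
            rw [Finset.sum_comm]
            exact Finset.sum_congr rfl fun cc _ => by rw [Finset.mul_sum]
        _ = 0 := by simp [hc']
    intro j
    by_contra hj
    exact hPK (Matrix.exists_mulVec_eq_zero_iff.mp ⟨c, fun h0 => hj (congrFun h0 j), hmv⟩)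
  exact aux_indep_mem hu humem

/-- The centralizer of a matrix A, as a ℂ-linear subspace of M_n(ℂ). -/
noncomputable def matCentralizer (n : ℕ) (A : Matrix (Fin n) (Fin n) ℂ) :
    Submodule ℂ (Matrix (Fin n) (Fin n) ℂ) where
  carrier := {B | A * B = B * A}
  add_mem' := by
    intro B C hB hC
    simp only [Set.mem_setOf_eq] at *
    rw [mul_add, add_mul, hB, hC]
  zero_mem' := by simp
  smul_mem' := by
    intro c B hB
    simp only [Set.mem_setOf_eq] at *
    rw [mul_smul_comm, smul_mul_assoc, hB]

/-- For every n ≥ 1 and A ∈ M_n(ℂ), the centralizer of A has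
ℂ-dimension at least n. -/
theorem centralizer_dim_ge (n : ℕ) (hn : 1 ≤ n) (A : Matrix (Fin n) (Fin n) ℂ) :
    n ≤ Module.finrank ℂ (matCentralizer n A) := by
  have hcent : matCentralizer n A = LinearMap.ker (LA n A) := by
    ext X
    simp only [matCentralizer, Submodule.mem_mk, AddSubmonoid.mem_mk, AddSubsemigroup.mem_mk,
      Set.mem_setOf_eq, LinearMap.mem_ker, LA_apply, sub_eq_zero]
  rw [hcent]
  have h1 := LinearMap.finrank_range_add_finrank_ker (LA n A)
  rw [Module.finrank_matrix, Module.finrank_self, mul_one] at h1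
  simp only [Fintype.card_fin] at h1
  have h2 := range_LA_le n A
  have h3 := range_LK_le n hn
  omega
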